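/- Every unique guarded fixpoint category satisfies dinaturality: for all f : ◇X × A → Y and g : ◇Y × A → X, (g ∘ ⟨p_Y ∘ f, π_r⟩)† = g ∘ ⟨p_Y ∘ h†, id_A⟩, where h = f ∘ ⟨p_X ∘ g, π_r⟩ : ◇Y × A → Y. -/

import Mathlib

open CategoryTheory CategoryTheory.Limits

universe v u

/-- **Dinaturality holds in every unique guarded fixpoint category.**
For `f : ◇X × A ⟶ Y` and `g : ◇Y × A ⟶ X`,
`(g ∘ ⟨p_Y ∘ f, π_r⟩)† = g ∘ ⟨p_Y ∘ h†, id_A⟩` where `h = f ∘ ⟨p_X ∘ g, π_r⟩`. -/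
theorem uniqueGuardedFixpoint_dinaturality
    {C : Type u} [Category.{v} C] [HasFiniteProducts C]
    (D : C ⥤ C) (p : 𝟭 C ⟶ D)
    (dag : ∀ {X Y : C}, (D.obj X ⨯ Y ⟶ X) → (Y ⟶ X))
    -- `dag f` is a solution of the fixpoint equation
    (hfix : ∀ {X Y : C} (f : D.obj X ⨯ Y ⟶ X),
      dag f = prod.lift (dag f) (𝟙 Y) ≫ prod.map (p.app X) (𝟙 Y) ≫ f)
    -- and it is the unique one
    (huniq : ∀ {X Y : C} (f : D.obj X ⨯ Y ⟶ X) (s : Y ⟶ X),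
      s = prod.lift s (𝟙 Y) ≫ prod.map (p.app X) (𝟙 Y) ≫ f → s = dag f) :
    ∀ {X Y A : C} (f : D.obj X ⨯ A ⟶ Y) (g : D.obj Y ⨯ A ⟶ X),
      dag (prod.lift (f ≫ p.app Y) prod.snd ≫ g) =
        prod.lift (dag (prod.lift (g ≫ p.app X) prod.snd ≫ f) ≫ p.app Y) (𝟙 A) ≫ g := by
  intro X Y A f g
  refine (huniq _ _ ?_).symm
  conv_lhs => rw [hfix (prod.lift (g ≫ p.app X) prod.snd ≫ f)]
  simp [prod.lift_map_assoc, prod.comp_lift_assoc, prod.comp_lift]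
  simp only [prod.lift_snd]
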